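/- arXiv:0906.5438 — 2 statements merged into one kernel-verified Lean document; each statement's English description precedes it below -/
import Mathlib

section
/- Define sequences $P_n, Q_n, R_n$ by the common recursion $X_n = (1-q-q^2)X_{n-1} + (q^{2n}-q^3+q^2+q)X_{n-2} + q^3 X_{n-3}$ with initial conditions $P_0=1, P_1=1-q, P_2=1-q+q^2+q^4$; $Q_0=1, Q_1=1, Q_2=1+q^4$; $R_0=1, R_1=1+q^2, R_2=1+q^2-q^3$. Then for all integers $m \ge 0$, the $3\times 3$ determinant $\det\begin{pmatrix} P_{m-1+1} & Q_{m} & R_{m} \\ P_{m+1} & Q_{m+1} & R_{m+1} \\ P_{m+2} & Q_{m+2} & R_{m+2} \end{pmatrix}$ satisfies $\det\begin{pmatrix} P_{m} & Q_{m} & R_{m} \\ P_{m+1} & Q_{m+1} & R_{m+1} \\ P_{m+2} & Q_{m+2} & R_{m+2} \end{pmatrix} = -q^{3m+5}$; equivalently, $\det\begin{pmatrix} P_{m-1} & Q_{m-1} & R_{m-1} \\ P_{m} & Q_{m} & R_{m} \\ P_{m+1} & Q_{m+1} & R_{m+1} \end{pmatrix} = -q^{3m+2}$ for all $m \ge 1$.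 -/
theorem stmt16 {R : Type*} [CommRing R] (q : R)
    (P Q S : ℕ → R)
    (hP0 : P 0 = 1) (hP1 : P 1 = 1 - q) (hP2 : P 2 = 1 - q + q ^ 2 + q ^ 4)
    (hQ0 : Q 0 = 1) (hQ1 : Q 1 = 1) (hQ2 : Q 2 = 1 + q ^ 4)
    (hS0 : S 0 = 1) (hS1 : S 1 = 1 + q ^ 2) (hS2 : S 2 = 1 + q ^ 2 - q ^ 3)
    (hP : ∀ n : ℕ, P (n + 3) = (1 - q - q ^ 2) * P (n + 2) +
      (q ^ (2 * (n + 3)) - q ^ 3 + q ^ 2 + q) * P (n + 1) + q ^ 3 * P n)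
    (hQ : ∀ n : ℕ, Q (n + 3) = (1 - q - q ^ 2) * Q (n + 2) +
      (q ^ (2 * (n + 3)) - q ^ 3 + q ^ 2 + q) * Q (n + 1) + q ^ 3 * Q n)
    (hS : ∀ n : ℕ, S (n + 3) = (1 - q - q ^ 2) * S (n + 2) +
      (q ^ (2 * (n + 3)) - q ^ 3 + q ^ 2 + q) * S (n + 1) + q ^ 3 * S n) :
    (∀ m : ℕ,
        (Matrix.det !![P m, Q m, S m;
                       P (m + 1), Q (m + 1), S (m + 1);
                       P (m + 2), Q (m + 2), S (m + 2)]) = -q ^ (3 * m + 5)) ∧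
      (∀ m : ℕ, 1 ≤ m →
        (Matrix.det !![P (m - 1), Q (m - 1), S (m - 1);
                       P m, Q m, S m;
                       P (m + 1), Q (m + 1), S (m + 1)]) = -q ^ (3 * m + 2)) := by
  have key : ∀ m : ℕ,
      (Matrix.det !![P m, Q m, S m;
                     P (m + 1), Q (m + 1), S (m + 1);
                     P (m + 2), Q (m + 2), S (m + 2)]) = -q ^ (3 * m + 5) := by
    intro m
    induction m with
    | zero =>
      simp [Matrix.det_fin_three]
      rw [hP0, hP1, hP2, hQ0, hQ1, hQ2, hS0, hS1, hS2]
      ring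
    | succ n ih =>
      simp [Matrix.det_fin_three] at ih ⊢
      have h1 : n + 1 + 1 = n + 2 := rfl
      have h2 : n + 1 + 2 = n + 3 := rfl
      rw [h1, h2, hP n, hQ n, hS n]
      linear_combination q ^ 3 * ih
  refine ⟨key, fun m hm => ?_⟩
  obtain ⟨k, rfl⟩ := Nat.exists_eq_add_of_le hm
  have e3 : 1 + k + 1 = k + 2 := by ring
  have e2 : 1 + k = k + 1 := by ring
  have e1 : 1 + k - 1 = k := by omega
  rw [e1, e3, e2, show 3 * (k + 1) + 2 = 3 * k + 5 by ring]
  exact key k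
end

section
/- Define $P_n, Q_n, R_n$ by the common recursion $X_n = (1+q^n)X_{n-1} + qX_{n-2} - qX_{n-3}$ with $P_0=1, P_1=1+q, P_2=1+2q+q^2+q^3$; $Q_0=1, Q_1=1+q, Q_2=1+q+q^2+q^3$; $R_0=0, R_1=1, R_2=1+q^2$. Then for all integers $m \ge 1$, $\det\begin{pmatrix} P_{m-1} & Q_{m-1} & R_{m-1} \\ P_m & Q_m & R_m \\ P_{m+1} & Q_{m+1} & R_{m+1} \end{pmatrix} = (-1)^{m-1} q^m$. -/
theorem stmt18 {R : Type*} [CommRing R] (q : R)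
    (P Q S : ℕ → R)
    (hP0 : P 0 = 1) (hP1 : P 1 = 1 + q) (hP2 : P 2 = 1 + 2 * q + q ^ 2 + q ^ 3)
    (hQ0 : Q 0 = 1) (hQ1 : Q 1 = 1 + q) (hQ2 : Q 2 = 1 + q + q ^ 2 + q ^ 3)
    (hS0 : S 0 = 0) (hS1 : S 1 = 1) (hS2 : S 2 = 1 + q ^ 2)
    (hP : ∀ n : ℕ, P (n + 3) = (1 + q ^ (n + 3)) * P (n + 2) + q * P (n + 1) - q * P n)
    (hQ : ∀ n : ℕ, Q (n + 3) = (1 + q ^ (n + 3)) * Q (n + 2) + q * Q (n + 1) - q * Q n)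
    (hS : ∀ n : ℕ, S (n + 3) = (1 + q ^ (n + 3)) * S (n + 2) + q * S (n + 1) - q * S n)
    (m : ℕ) (hm : 1 ≤ m) :
    Matrix.det !![P (m - 1), Q (m - 1), S (m - 1);
                  P m, Q m, S m;
                  P (m + 1), Q (m + 1), S (m + 1)] = (-1) ^ (m - 1) * q ^ m := by
  obtain ⟨k, rfl⟩ := Nat.exists_eq_add_of_le hm
  simp only [Nat.add_sub_cancel_left] at *
  rw [Nat.add_comm 1 k] at *
  induction k with
  | zero =>
    simp [Matrix.det_fin_three, hP0, hP1, hP2, hQ0, hQ1, hQ2, hS0, hS1, hS2]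
    ring
  | succ n ih =>
    have IH := ih (by omega)
    simp [Matrix.det_fin_three] at IH ⊢
    have e1 : n + 1 + 1 + 1 = n + 3 := by ring
    have e2 : n + 1 + 1 = n + 2 := by ring
    rw [e1, e2, hP n, hQ n, hS n, pow_succ]
    linear_combination (-q) * IH
end
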